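/- Under the same setup, with $\beta = \frac{\gamma_1^2 - \gamma_2^2}{2\gamma_2} + \tfrac{1}{2}\alpha\gamma_1^2 L$, one has $\mathbb{E}[F(x+p)] \le F(x) - \tfrac{1}{2}\alpha(\gamma_2 - \alpha\gamma_1^2 L)\|\nabla F(x)\|^2 + \alpha\beta\,\mathbb{E}[\|\nabla F(x) - g\|^2]$. -/

import Mathlib

open MeasureTheory
open scoped RealInnerProductSpace

set_option maxHeartbeats 1000000

private lemma descent {n : ℕ} (F : EuclideanSpace ℝ (Fin n) → ℝ)
    (F' : EuclideanSpace ℝ (Fin n) → EuclideanSpace ℝ (Fin n)) (L : ℝ) (hL : 0 ≤ L)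
    (hgrad : ∀ y, HasGradientAt F (F' y) y)
    (hlip : LipschitzWith (Real.toNNReal L) F')
    (x v : EuclideanSpace ℝ (Fin n)) :
    F (x + v) ≤ F x + ⟪F' x, v⟫ + L / 2 * ‖v‖ ^ 2 := by
  set ψ : ℝ → ℝ := fun t => ⟪F' (x + t • v), v⟫ with hψ
  have hline : Continuous (fun t : ℝ => x + t • v) :=
    continuous_const.add (continuous_id.smul continuous_const)
  have hψcont : Continuous ψ :=
    Continuous.inner (hlip.continuous.comp hline) continuous_const
  have hderiv : ∀ t : ℝ, HasDerivAt (fun t : ℝ => F (x + t • v)) (ψ t) t := by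
    intro t
    have h1 : HasDerivAt (fun t : ℝ => x + t • v) v t := by
      simpa using ((hasDerivAt_id t).smul_const v).const_add x
    have h2 := (hgrad (x + t • v)).hasFDerivAt
    have h3 := h2.comp_hasDerivAt t h1
    simpa [hψ, InnerProductSpace.toDual_apply_apply, Function.comp_def] using h3
  have key : F (x + v) - F x = ∫ t in (0:ℝ)..1, ψ t := by
    have h := intervalIntegral.integral_eq_sub_of_hasDerivAt
      (f := fun t : ℝ => F (x + t • v)) (f' := ψ)
      (fun t _ => hderiv t) (hψcont.intervalIntegrable 0 1)
    simp only [one_smul, zero_smul, add_zero] at h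
    linarith [h]
  have hψ0 : ψ 0 = ⟪F' x, v⟫ := by simp [hψ]
  have hbound : ∀ t ∈ Set.Icc (0:ℝ) 1, ψ t ≤ ψ 0 + L * ‖v‖ ^ 2 * t := by
    intro t ht
    have h1 : ψ t - ψ 0 = ⟪F' (x + t • v) - F' x, v⟫ := by
      simp [hψ, inner_sub_left]
    have h2 : ⟪F' (x + t • v) - F' x, v⟫ ≤ ‖F' (x + t • v) - F' x‖ * ‖v‖ :=
      real_inner_le_norm _ _
    have h3 : ‖F' (x + t • v) - F' x‖ ≤ L * (t * ‖v‖) := by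
      have := hlip.dist_le_mul (x + t • v) x
      rw [Real.coe_toNNReal L hL] at this
      have hd : dist (x + t • v) x = t * ‖v‖ := by
        rw [dist_eq_norm]
        simp [norm_smul, abs_of_nonneg ht.1]
      rw [← dist_eq_norm, ← hd]
      exact this
    have hv : (0:ℝ) ≤ ‖v‖ := norm_nonneg _
    nlinarith [mul_le_mul_of_nonneg_right h3 hv]
  have hint1 : IntervalIntegrable ψ MeasureTheory.volume 0 1 :=
    hψcont.intervalIntegrable 0 1
  have hi : IntervalIntegrable (fun t : ℝ => L * ‖v‖ ^ 2 * t)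
      MeasureTheory.volume 0 1 := by
    exact Continuous.intervalIntegrable (by fun_prop) 0 1
  have hint2 : IntervalIntegrable (fun t => ψ 0 + L * ‖v‖ ^ 2 * t)
      MeasureTheory.volume 0 1 := by
    exact Continuous.intervalIntegrable (by fun_prop) 0 1
  have hmono : ∫ t in (0:ℝ)..1, ψ t ≤ ∫ t in (0:ℝ)..1, (ψ 0 + L * ‖v‖ ^ 2 * t) :=
    intervalIntegral.integral_mono_on (by norm_num) hint1 hint2 hbound
  have hval : ∫ t in (0:ℝ)..1, (ψ 0 + L * ‖v‖ ^ 2 * t) = ψ 0 + L / 2 * ‖v‖ ^ 2 := by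
    rw [intervalIntegral.integral_add (intervalIntegrable_const) hi,
      intervalIntegral.integral_const_mul, integral_id]
    simp; ring
  rw [hval, hψ0] at hmono
  linarith [key ▸ hmono]

theorem stmt_8 {n : ℕ} (F : EuclideanSpace ℝ (Fin n) → ℝ)
    (F' : EuclideanSpace ℝ (Fin n) → EuclideanSpace ℝ (Fin n)) (L : ℝ) (hL : 0 < L)
    (hgrad : ∀ y, HasGradientAt F (F' y) y)
    (hlip : LipschitzWith (Real.toNNReal L) F')
    (x : EuclideanSpace ℝ (Fin n)) (α γ₁ γ₂ β : ℝ)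
    (hα : 0 < α) (hγ₂ : 0 < γ₂) (hγ : γ₂ < γ₁)
    (hβ : β = (γ₁ ^ 2 - γ₂ ^ 2) / (2 * γ₂) + (1 / 2) * α * γ₁ ^ 2 * L)
    {Ω : Type*} [MeasurableSpace Ω] (μ : Measure Ω) [IsProbabilityMeasure μ]
    (g : Ω → EuclideanSpace ℝ (Fin n))
    (p : Ω → EuclideanSpace ℝ (Fin n))
    (hp : ∀ ω, p ω =
      if ‖g ω‖ < 1 / γ₁ then (-(γ₁ * α)) • g ω
      else if ‖g ω‖ ≤ 1 / γ₂ then (-(α / ‖g ω‖)) • g ω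
      else (-(γ₂ * α)) • g ω)
    (hint : Integrable g μ)
    (hintF : Integrable (fun ω => F (x + p ω)) μ)
    (hint2 : Integrable (fun ω => ‖F' x - g ω‖ ^ 2) μ)
    (hmean : ∫ ω, g ω ∂μ = F' x) :
    ∫ ω, F (x + p ω) ∂μ ≤
      F x - (1 / 2) * α * (γ₂ - α * γ₁ ^ 2 * L) * ‖F' x‖ ^ 2
        + α * β * ∫ ω, ‖F' x - g ω‖ ^ 2 ∂μ := by
  have hγ₁ : 0 < γ₁ := hγ₂.trans hγ
  -- pointwise bound
  have key : ∀ ω, F (x + p ω) ≤ F x + (-(α * γ₂)) * ⟪F' x, g ω⟫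
      + (α * (γ₁ - γ₂)) * ‖F' x - g ω‖ ^ 2 + (L * α ^ 2 * γ₁ ^ 2 / 2) * ‖g ω‖ ^ 2 := by
    intro ω
    obtain ⟨γ, hγ2', hγ1', hpω⟩ : ∃ γ, γ₂ ≤ γ ∧ γ ≤ γ₁ ∧ p ω = (-(γ * α)) • g ω := by
      rw [hp ω]
      split_ifs with h1 h2
      · exact ⟨γ₁, hγ.le, le_refl _, rfl⟩
      · push_neg at h1
        have hg0 : 0 < ‖g ω‖ := lt_of_lt_of_le (by positivity) h1
        refine ⟨1 / ‖g ω‖, ?_, ?_, ?_⟩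
        · rw [le_one_div hγ₂ hg0]; exact h2
        · rw [one_div_le hg0 hγ₁]; exact h1
        · congr 1; field_simp
      · exact ⟨γ₂, le_refl _, hγ.le, rfl⟩
    have hγpos : 0 < γ := lt_of_lt_of_le hγ₂ hγ2'
    have hd := descent F F' L hL.le hgrad hlip x (p ω)
    rw [hpω] at hd
    rw [hpω]
    rw [real_inner_smul_right] at hd
    have hns : ‖(-(γ * α)) • g ω‖ ^ 2 = (γ * α) ^ 2 * ‖g ω‖ ^ 2 := by
      rw [norm_smul]
      have : ‖-(γ * α)‖ = γ * α := by
        rw [norm_neg, Real.norm_eq_abs, abs_of_pos (mul_pos hγpos hα)]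
      rw [this]; ring
    rw [hns] at hd
    set s := ⟪F' x, g ω⟫ with hs
    have hkey : -s ≤ ‖F' x - g ω‖ ^ 2 := by
      have h1 := norm_sub_sq_real (F' x) (g ω)
      have h2 := real_inner_le_norm (F' x) (g ω)
      nlinarith [norm_nonneg (F' x), norm_nonneg (g ω), sq_nonneg (‖F' x‖ - ‖g ω‖)]
    have hG : (0:ℝ) ≤ ‖g ω‖ ^ 2 := sq_nonneg _
    have hE : (0:ℝ) ≤ ‖F' x - g ω‖ ^ 2 := sq_nonneg _
    have hA : (-(γ * α)) * s ≤ (-(α * γ₂)) * s + (α * (γ₁ - γ₂)) * ‖F' x - g ω‖ ^ 2 := by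
      nlinarith [mul_nonneg (sub_nonneg.2 hγ2') (by linarith : (0:ℝ) ≤ ‖F' x - g ω‖ ^ 2 + s),
        mul_nonneg (sub_nonneg.2 hγ1') hE, hα.le]
    have hB : L / 2 * ((γ * α) ^ 2 * ‖g ω‖ ^ 2) ≤ (L * α ^ 2 * γ₁ ^ 2 / 2) * ‖g ω‖ ^ 2 := by
      nlinarith [mul_nonneg (mul_nonneg hL.le (sq_nonneg α)) hG,
        mul_nonneg (sub_nonneg.2 hγ1') (by linarith : (0:ℝ) ≤ γ₁ + γ),
        mul_nonneg (mul_nonneg (mul_nonneg hL.le (sq_nonneg α)) hG)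
          (mul_nonneg (sub_nonneg.2 hγ1') (by linarith : (0:ℝ) ≤ γ₁ + γ))]
    linarith
  -- integrability of pieces
  have hintI : Integrable (fun ω => ⟪F' x, g ω⟫) μ := hint.const_inner _
  have hinte : Integrable (fun ω => F' x - g ω) μ := (integrable_const _).sub hint
  have hintIe : Integrable (fun ω => ⟪F' x, F' x - g ω⟫) μ := hinte.const_inner _
  have hgid : ∀ ω, ‖g ω‖ ^ 2
      = ‖F' x‖ ^ 2 - 2 * ⟪F' x, F' x - g ω⟫ + ‖F' x - g ω‖ ^ 2 := by
    intro ω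
    have h := norm_sub_sq_real (F' x) (F' x - g ω)
    have h2 : F' x - (F' x - g ω) = g ω := by abel
    rw [h2] at h
    linarith
  have hc : Integrable (fun _ : Ω => ‖F' x‖ ^ 2) μ := integrable_const _
  have hsub : Integrable (fun ω => ‖F' x‖ ^ 2 - 2 * ⟪F' x, F' x - g ω⟫) μ :=
    hc.sub (hintIe.const_mul 2)
  have hintG : Integrable (fun ω => ‖g ω‖ ^ 2) μ :=
    (hsub.add hint2).congr (Filter.Eventually.of_forall fun ω => (hgid ω).symm)
  -- integral identities
  have h1 : ∫ ω, ⟪F' x, g ω⟫ ∂μ = ‖F' x‖ ^ 2 := by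
    rw [integral_inner hint, hmean, real_inner_self_eq_norm_sq]
  have hinte0 : ∫ ω, (F' x - g ω) ∂μ = 0 := by
    rw [integral_sub (integrable_const _) hint, hmean]
    simp
  have h2 : ∫ ω, ⟪F' x, F' x - g ω⟫ ∂μ = 0 := by
    rw [integral_inner hinte, hinte0, inner_zero_right]
  have h3 : ∫ ω, ‖g ω‖ ^ 2 ∂μ = ‖F' x‖ ^ 2 + ∫ ω, ‖F' x - g ω‖ ^ 2 ∂μ := by
    calc ∫ ω, ‖g ω‖ ^ 2 ∂μ
        = ∫ ω, (‖F' x‖ ^ 2 - 2 * ⟪F' x, F' x - g ω⟫ + ‖F' x - g ω‖ ^ 2) ∂μ := by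
          exact integral_congr_ae (Filter.Eventually.of_forall fun ω => hgid ω)
      _ = ‖F' x‖ ^ 2 + ∫ ω, ‖F' x - g ω‖ ^ 2 ∂μ := by
          rw [integral_add hsub hint2, integral_sub hc (hintIe.const_mul 2),
            integral_const_mul _ _, h2]
          simp
  set E2 := ∫ ω, ‖F' x - g ω‖ ^ 2 ∂μ with hE2
  have hE2nn : 0 ≤ E2 := integral_nonneg fun ω => sq_nonneg _
  -- integrate the pointwise bound
  have ha1 : Integrable (fun ω => F x + (-(α * γ₂)) * ⟪F' x, g ω⟫) μ :=
    (integrable_const (F x)).add (hintI.const_mul _)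
  have ha2 : Integrable (fun ω => F x + (-(α * γ₂)) * ⟪F' x, g ω⟫
      + (α * (γ₁ - γ₂)) * ‖F' x - g ω‖ ^ 2) μ := ha1.add (hint2.const_mul _)
  have hRHSint : Integrable (fun ω => F x + (-(α * γ₂)) * ⟪F' x, g ω⟫
      + (α * (γ₁ - γ₂)) * ‖F' x - g ω‖ ^ 2 + (L * α ^ 2 * γ₁ ^ 2 / 2) * ‖g ω‖ ^ 2) μ :=
    ha2.add (hintG.const_mul _)
  have hmono := integral_mono hintF hRHSint key
  have hRHSval : ∫ ω, (F x + (-(α * γ₂)) * ⟪F' x, g ω⟫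
      + (α * (γ₁ - γ₂)) * ‖F' x - g ω‖ ^ 2 + (L * α ^ 2 * γ₁ ^ 2 / 2) * ‖g ω‖ ^ 2) ∂μ
      = F x + (-(α * γ₂)) * ‖F' x‖ ^ 2 + (α * (γ₁ - γ₂)) * E2
        + (L * α ^ 2 * γ₁ ^ 2 / 2) * (‖F' x‖ ^ 2 + E2) := by
    rw [integral_add ha2 (hintG.const_mul _), integral_add ha1 (hint2.const_mul _),
      integral_add (integrable_const (F x)) (hintI.const_mul _),
      integral_const_mul _ _, integral_const_mul _ _, integral_const_mul _ _, h1, h3]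
    simp [hE2]
  rw [hRHSval] at hmono
  have hfinal : F x + (-(α * γ₂)) * ‖F' x‖ ^ 2 + (α * (γ₁ - γ₂)) * E2
      + (L * α ^ 2 * γ₁ ^ 2 / 2) * (‖F' x‖ ^ 2 + E2)
      ≤ F x - (1 / 2) * α * (γ₂ - α * γ₁ ^ 2 * L) * ‖F' x‖ ^ 2 + α * β * E2 := by
    rw [hβ]
    have hN : (0:ℝ) ≤ ‖F' x‖ ^ 2 := sq_nonneg _
    have key1 : α * (γ₁ - γ₂) + L * α ^ 2 * γ₁ ^ 2 / 2
        ≤ α * ((γ₁ ^ 2 - γ₂ ^ 2) / (2 * γ₂) + 1 / 2 * α * γ₁ ^ 2 * L) := by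
      have h : γ₁ - γ₂ ≤ (γ₁ ^ 2 - γ₂ ^ 2) / (2 * γ₂) := by
        rw [le_div_iff₀ (by positivity)]
        nlinarith [sq_nonneg (γ₁ - γ₂)]
      nlinarith [hα.le]
    have key2 : -(α * γ₂) + L * α ^ 2 * γ₁ ^ 2 / 2
        ≤ -((1 / 2) * α * (γ₂ - α * γ₁ ^ 2 * L)) := by
      nlinarith [mul_pos hα hγ₂]
    nlinarith [mul_le_mul_of_nonneg_right key1 hE2nn, mul_le_mul_of_nonneg_right key2 hN]
  linarith
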